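/- Let V be a real vector space and E a nonempty set of linear functionals on V (the 'effects'), containing a distinguished functional e (the 'deterministic effect') and closed under the complement a ↦ e − a. Let ρ₀, ρ₁ ∈ V satisfy e ρ₀ = e ρ₁ = 1 and 0 ≤ a ρᵢ ≤ 1 for every a ∈ E and i = 0, 1. Let π₀, π₁ ≥ 0 with π₀ + π₁ = 1 and set δ := π₁ • ρ₁ − π₀ • ρ₀. Then the optimal success probability of binary discrimination equals the Helstrom-type expression: sSup { π₀ * ((e − a) ρ₀) + π₁ * (a ρ₁) | a ∈ E } = (1 + sSup { a δ | a ∈ E } − sInf { a δ | a ∈ E }) / 2. -/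

import Mathlib

private lemma sSup_const_add_image {S : Set ℝ} (hne : S.Nonempty) (hbdd : BddAbove S) (c : ℝ) :
    sSup ((fun x => c + x) '' S) = c + sSup S := by
  apply IsLUB.csSup_eq _ (hne.image _)
  have h := isLUB_csSup hne hbdd
  constructor
  · rintro y ⟨x, hx, rfl⟩
    exact add_le_add_right (h.1 hx) c
  · intro y hy
    have : sSup S ≤ y - c := by
      apply h.2
      intro x hx
      have := hy ⟨x, hx, rfl⟩
      simp only at this
      linarith
    linarith

private lemma sInf_const_sub_image {S : Set ℝ} (hne : S.Nonempty) (hbdd : BddAbove S) (c : ℝ) :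
    sInf ((fun x => c - x) '' S) = c - sSup S := by
  apply IsGLB.csInf_eq _ (hne.image _)
  have h := isLUB_csSup hne hbdd
  constructor
  · rintro y ⟨x, hx, rfl⟩
    have := h.1 hx
    simp only []
    linarith
  · intro y hy
    have : sSup S ≤ c - y := by
      apply h.2
      intro x hx
      have := hy ⟨x, hx, rfl⟩
      simp only at this
      linarith
    linarith

/-- Helstrom-type formula for the optimal binary discrimination probability:
`p_succ^{opt} = (1 + ‖π₁ρ₁ − π₀ρ₀‖)/2`, where the operational norm of `δ`
relative to the effect set `E` is `sSup {a δ | a ∈ E} − sInf {a δ | a ∈ E}`. -/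
theorem optimal_discrimination_helstrom
    (V : Type*) [AddCommGroup V] [Module ℝ V]
    (E : Set (V →ₗ[ℝ] ℝ)) (hE : E.Nonempty)
    (e : V →ₗ[ℝ] ℝ) (he : e ∈ E)
    (hcompl : ∀ a ∈ E, e - a ∈ E)
    (ρ₀ ρ₁ : V) (h0 : e ρ₀ = 1) (h1 : e ρ₁ = 1)
    (hb0 : ∀ a ∈ E, 0 ≤ a ρ₀ ∧ a ρ₀ ≤ 1)
    (hb1 : ∀ a ∈ E, 0 ≤ a ρ₁ ∧ a ρ₁ ≤ 1)
    (π₀ π₁ : ℝ) (hπ0 : 0 ≤ π₀) (hπ1 : 0 ≤ π₁) (hsum : π₀ + π₁ = 1)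
    (δ : V) (hδ : δ = π₁ • ρ₁ - π₀ • ρ₀) :
    sSup {x : ℝ | ∃ a ∈ E, x = π₀ * ((e - a) ρ₀) + π₁ * (a ρ₁)} =
      (1 + sSup {x : ℝ | ∃ a ∈ E, x = a δ} - sInf {x : ℝ | ∃ a ∈ E, x = a δ}) / 2 := by
  set S : Set ℝ := {x : ℝ | ∃ a ∈ E, x = a δ} with hS
  -- value of a δ
  have hval : ∀ a : V →ₗ[ℝ] ℝ, a δ = π₁ * a ρ₁ - π₀ * a ρ₀ := by
    intro a; rw [hδ]; simp [map_sub, map_smul, smul_eq_mul]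
  have hSne : S.Nonempty := ⟨e δ, e, he, rfl⟩
  have hSbdd : BddAbove S := by
    refine ⟨π₁, ?_⟩
    rintro x ⟨a, ha, rfl⟩
    rw [hval]
    nlinarith [(hb0 a ha).1, (hb1 a ha).2]
  -- LHS set is the translate of S by π₀
  have hset1 : {x : ℝ | ∃ a ∈ E, x = π₀ * ((e - a) ρ₀) + π₁ * (a ρ₁)}
      = (fun x => π₀ + x) '' S := by
    ext x
    constructor
    · rintro ⟨a, ha, rfl⟩
      refine ⟨a δ, ⟨a, ha, rfl⟩, ?_⟩
      rw [hval]
      simp [LinearMap.sub_apply, h0]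
      ring
    · rintro ⟨y, ⟨a, ha, rfl⟩, rfl⟩
      refine ⟨a, ha, ?_⟩
      rw [hval]
      simp [LinearMap.sub_apply, h0]
      ring
  -- S invariant under x ↦ (π₁ - π₀) - x
  have hset2 : (fun x => (π₁ - π₀) - x) '' S = S := by
    ext x
    constructor
    · rintro ⟨y, ⟨a, ha, rfl⟩, rfl⟩
      refine ⟨e - a, hcompl a ha, ?_⟩
      rw [hval, hval]
      simp [LinearMap.sub_apply, h0, h1]
      ring
    · rintro ⟨a, ha, rfl⟩
      refine ⟨(e - a) δ, ⟨e - a, hcompl a ha, rfl⟩, ?_⟩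
      rw [hval, hval]
      simp [LinearMap.sub_apply, h0, h1]
      ring
  have hinf : sInf S = (π₁ - π₀) - sSup S := by
    conv_lhs => rw [← hset2]
    exact sInf_const_sub_image hSne hSbdd _
  rw [hset1, sSup_const_add_image hSne hSbdd, hinf]
  linarith
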